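/- For positive integers m and n, ∫_0^1 φ(mx)·φ(nx) dx = (1/12)·gcd(m,n)²/(mn), where φ(x) = {x} − 1/2 is the centered fractional part extended periodically. -/

import Mathlib

open MeasureTheory intervalIntegral Finset

noncomputable def phi (x : ℝ) : ℝ := Int.fract x - 1/2

lemma phi_add_int (x : ℝ) (k : ℤ) : phi (x + k) = phi x := by
  simp [phi, Int.fract_add_intCast]

lemma phi_add_nat (x : ℝ) (k : ℕ) : phi (x + k) = phi x := by
  simpa using phi_add_int x k

lemma phi_abs_le (x : ℝ) : |phi x| ≤ 1 := by
  have h1 := Int.fract_nonneg x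
  have h2 := Int.fract_lt_one x
  rw [phi, abs_le]; constructor <;> nlinarith

lemma phi_intgr (a b c d p q : ℝ) :
    IntervalIntegrable (fun x => phi (a*x+b) * phi (c*x+d)) volume p q := by
  rw [intervalIntegrable_iff]
  haveI : IsFiniteMeasure (volume.restrict (Set.uIoc p q)) := by
    constructor
    rw [Measure.restrict_apply_univ]
    exact (measure_lt_top_of_subset Set.uIoc_subset_uIcc (by simp)).trans_le le_top |>.ne |> (lt_top_iff_ne_top.mpr)
  apply MeasureTheory.Integrable.mono' (g := fun _ => (1:ℝ)) (integrable_const 1)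
  · apply Measurable.aestronglyMeasurable
    have h : Measurable phi := (measurable_fract).sub measurable_const
    exact (h.comp (by fun_prop)).mul (h.comp (by fun_prop))
  · filter_upwards with x
    rw [norm_mul]
    calc ‖phi (a*x+b)‖ * ‖phi (c*x+d)‖ ≤ 1 * 1 := by
          apply mul_le_mul (phi_abs_le _) (phi_abs_le _) (abs_nonneg _) zero_le_one
      _ = 1 := one_mul 1

lemma gauss (m : ℕ) : ∑ j ∈ Finset.range m, (j:ℝ) = m * (m-1) / 2 := by
  induction m with
  | zero => simp
  | succ k ih => rw [Finset.sum_range_succ, ih]; push_cast; ring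

lemma dist_rel (m : ℕ) (hm : 0 < m) (y : ℝ) :
    ∑ j ∈ Finset.range m, phi ((y + j)/m) = phi y := by
  set S : ℝ → ℝ := fun y => ∑ j ∈ Finset.range m, phi ((y + j)/m) with hS
  have hSdef : ∀ z : ℝ, S z = ∑ j ∈ Finset.range m, phi ((z + j)/m) := fun z => rfl
  have hper : Function.Periodic S 1 := by
    intro y
    have h1 : S (y + 1) = ∑ j ∈ Finset.range m, phi ((y + (j+1))/m) := by
      rw [hSdef]; apply Finset.sum_congr rfl; intro j _; ring_nf
    have h2 : ∑ j ∈ Finset.range (m+1), phi ((y + j)/m)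
        = (∑ j ∈ Finset.range m, phi ((y + (j+1))/m)) + phi ((y + 0)/m) := by
      rw [Finset.sum_range_succ']
      congr 1
      · apply Finset.sum_congr rfl; intro j _; push_cast; ring_nf
      · norm_num
    have h3 : ∑ j ∈ Finset.range (m+1), phi ((y + j)/m)
        = S y + phi ((y + m)/m) := by rw [Finset.sum_range_succ, hSdef]
    have h4 : phi ((y + m)/m) = phi ((y + 0)/m) := by
      have hm0 : (m:ℝ) ≠ 0 := by positivity
      have : (y + m)/m = (y+0)/m + 1 := by field_simp; ring
      rw [this]
      simpa using phi_add_int ((y+0)/m) 1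
    have h5 := h2.symm.trans h3
    rw [h4] at h5
    linarith [h1]
  have hred : S y = S (Int.fract y) := by
    have h5 : Function.Periodic S ((⌊y⌋:ℤ) • (1:ℝ)) := hper.zsmul ⌊y⌋
    have h6 := h5 (Int.fract y)
    rw [zsmul_eq_mul, mul_one] at h6
    rw [Int.fract] at h6 ⊢
    simpa [sub_add_cancel] using h6
  have hmain : S (Int.fract y) = phi y := by
    rw [hSdef]
    have hf0 := Int.fract_nonneg y
    have hf1 := Int.fract_lt_one y
    have hterm : ∀ j ∈ Finset.range m, phi ((Int.fract y + j)/m)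
        = (Int.fract y + j)/m - 1/2 := by
      intro j hj
      rw [Finset.mem_range] at hj
      rw [phi, Int.fract_eq_self.mpr]
      constructor
      · positivity
      · rw [div_lt_one (by positivity)]
        have : (j:ℝ) ≤ (m:ℝ) - 1 := by
          have : (j:ℝ) + 1 ≤ m := by exact_mod_cast hj
          linarith
        linarith
    rw [Finset.sum_congr rfl hterm]
    have hm0 : (m:ℝ) ≠ 0 := by positivity
    have hsum : ∑ j ∈ Finset.range m, ((Int.fract y + j)/m - 1/2)
        = (∑ j ∈ Finset.range m, (j:ℝ))/m + Int.fract y - (m:ℝ)/2 := by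
      rw [Finset.sum_sub_distrib, ← Finset.sum_div, Finset.sum_add_distrib]
      simp [Finset.sum_const]
      field_simp
      ring
    rw [hsum, gauss]
    simp only [phi]
    field_simp
    ring
  rw [← hSdef, hred, hmain]

lemma reindex (m n : ℕ) (hm : 0 < m) (h : Nat.Coprime n m) (z : ℝ) :
    ∑ j ∈ Finset.range m, phi ((z + n*j)/m) = ∑ j ∈ Finset.range m, phi ((z + j)/m) := by
  rcases eq_or_lt_of_le (show 1 ≤ m from hm) with h1 | h1
  · -- m = 1
    simp [← h1]
  -- 1 < m
  obtain ⟨n', -, hn'⟩ := Nat.exists_mul_mod_eq_one_of_coprime h h1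
  have key : ∀ (a : ℕ) (w : ℝ), phi ((w + (a % m : ℕ))/m) = phi ((w + a)/m) := by
    intro a w
    have hm0 : (m:ℝ) ≠ 0 := by positivity
    have ha : (a : ℝ) = (a % m : ℕ) + (m : ℝ) * ((a / m : ℕ)) := by
      exact_mod_cast congrArg (Nat.cast : ℕ → ℝ) (Nat.mod_add_div a m).symm
    have heq : (w + a)/m = (w + ((a % m : ℕ):ℝ))/m + ((a / m : ℕ) : ℝ) := by
      rw [ha]; field_simp; ring
    rw [heq, phi_add_nat]
  have hinvL : ∀ j < m, n' * (n * j % m) % m = j := by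
    intro j hj
    have h1 : n' * (n * j % m) ≡ n' * (n * j) [MOD m] := Nat.ModEq.mul_left n' (Nat.mod_modEq (n*j) m)
    have h2 : n' * (n * j) = (n * n') * j := by ring
    have h3 : (n * n') * j ≡ 1 * j [MOD m] := Nat.ModEq.mul_right j (hn' ▸ (Nat.mod_modEq (n*n') m)).symm
    have h4 : n' * (n * j % m) ≡ j [MOD m] := (h1.trans (h2 ▸ h3)).trans (by rw [one_mul])
    calc n' * (n * j % m) % m = j % m := h4
      _ = j := Nat.mod_eq_of_lt hj
  have hinvR : ∀ j < m, n * (n' * j % m) % m = j := by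
    intro j hj
    have h1 : n * (n' * j % m) ≡ n * (n' * j) [MOD m] := Nat.ModEq.mul_left n (Nat.mod_modEq (n'*j) m)
    have h2 : n * (n' * j) = (n * n') * j := by ring
    have h3 : (n * n') * j ≡ 1 * j [MOD m] := Nat.ModEq.mul_right j (hn' ▸ (Nat.mod_modEq (n*n') m)).symm
    have h4 : n * (n' * j % m) ≡ j [MOD m] := (h1.trans (h2 ▸ h3)).trans (by rw [one_mul])
    calc n * (n' * j % m) % m = j % m := h4
      _ = j := Nat.mod_eq_of_lt hj
  refine Finset.sum_nbij' (fun j => n * j % m) (fun j => n' * j % m) ?_ ?_ ?_ ?_ ?_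
  · intro a _; exact Finset.mem_range.mpr (Nat.mod_lt _ hm)
  · intro a _; exact Finset.mem_range.mpr (Nat.mod_lt _ hm)
  · intro a ha; exact hinvL a (Finset.mem_range.mp ha)
  · intro a ha; exact hinvR a (Finset.mem_range.mp ha)
  · intro a _
    have := (key (n*a) z).symm
    push_cast at this ⊢
    exact this

lemma reduce (m n : ℕ) (hm : 0 < m) (h : Nat.Coprime n m) :
    ∫ x in (0:ℝ)..1, phi (m*x) * phi (n*x)
      = (m:ℝ)⁻¹ * ∫ x in (0:ℝ)..1, phi x * phi (n*x) := by
  have hm0 : (m:ℝ) ≠ 0 := by positivity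
  set F : ℝ → ℝ := fun u => phi u * phi ((n:ℝ)/m * u) with hF
  have hFint : ∀ p q : ℝ, IntervalIntegrable F volume p q := by
    intro p q
    have := phi_intgr 1 0 ((n:ℝ)/m) 0 p q
    simpa using this
  have step1 : ∫ x in (0:ℝ)..1, phi (m*x) * phi (n*x) = ∫ x in (0:ℝ)..1, F ((m:ℝ)*x) := by
    apply intervalIntegral.integral_congr
    intro x _
    simp only [hF]
    congr 2
    field_simp
  have step2 : ∫ x in (0:ℝ)..1, F ((m:ℝ)*x) = (m:ℝ)⁻¹ • ∫ x in (0:ℝ)..(m:ℝ), F x := by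
    rw [intervalIntegral.integral_comp_mul_left F hm0]
    norm_num
  have step3 : ∫ x in (0:ℝ)..(m:ℝ), F x = ∑ j ∈ Finset.range m, ∫ x in (j:ℝ)..((j:ℝ)+1), F x := by
    have := intervalIntegral.sum_integral_adjacent_intervals
      (a := fun k : ℕ => (k:ℝ)) (n := m) (f := F) (μ := volume)
      (fun k _ => by simpa using hFint k (k+1))
    simp only [Nat.cast_zero] at this
    rw [← this]
    apply Finset.sum_congr rfl
    intro j _
    push_cast
    norm_num
  have step4 : ∀ j : ℕ, (∫ x in (j:ℝ)..((j:ℝ)+1), F x)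
      = ∫ x in (0:ℝ)..1, phi x * phi (((n:ℝ)*x + (n:ℝ)*j)/m) := by
    intro j
    have hshift : ∫ x in (0:ℝ)..1, F (x + (j:ℝ)) = ∫ x in (0:ℝ)+(j:ℝ)..(1:ℝ)+(j:ℝ), F x :=
      intervalIntegral.integral_comp_add_right F (j:ℝ)
    rw [zero_add, add_comm (1:ℝ) (j:ℝ)] at hshift
    rw [← hshift]
    apply intervalIntegral.integral_congr
    intro x _
    simp only [hF]
    rw [phi_add_nat]
    congr 2
    field_simp
  have step5 : ∑ j ∈ Finset.range m, ∫ x in (j:ℝ)..((j:ℝ)+1), F x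
      = ∫ x in (0:ℝ)..1, ∑ j ∈ Finset.range m, phi x * phi (((n:ℝ)*x + (n:ℝ)*j)/m) := by
    rw [Finset.sum_congr rfl fun j _ => step4 j]
    refine (intervalIntegral.integral_finset_sum ?_).symm
    intro j _
    have := phi_intgr 1 0 ((n:ℝ)/m) ((n:ℝ)*j/m) 0 1
    apply IntervalIntegrable.congr_ae this
    apply Filter.Eventually.of_forall
    intro x
    simp only []
    rw [one_mul, add_zero, show (n:ℝ)/m*x + (n:ℝ)*j/m = ((n:ℝ)*x+(n:ℝ)*j)/m by ring]
  have step6 : ∀ x : ℝ, ∑ j ∈ Finset.range m, phi x * phi (((n:ℝ)*x + (n:ℝ)*j)/m)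
      = phi x * phi ((n:ℝ)*x) := by
    intro x
    rw [← Finset.mul_sum]
    congr 1
    rw [reindex m n hm h ((n:ℝ)*x), dist_rel m hm ((n:ℝ)*x)]
  rw [step1, step2, step3, step5]
  rw [intervalIntegral.integral_congr (g := fun x => phi x * phi ((n:ℝ)*x))
    (fun x _ => step6 x)]
  simp

lemma base : ∫ x in (0:ℝ)..1, phi x * phi x = 1/12 := by
  have h1 : ∀ᵐ x : ℝ, x ∉ ({1} : Set ℝ) := by
    rw [MeasureTheory.ae_iff]
    simpa using Real.volume_singleton (x := 1)
  have h2 : ∫ x in (0:ℝ)..1, phi x * phi x = ∫ x in (0:ℝ)..1, (x - 1/2) * (x - 1/2) := by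
    apply intervalIntegral.integral_congr_ae
    filter_upwards [h1] with x hx hxI
    rw [Set.uIoc_of_le (by norm_num : (0:ℝ) ≤ 1)] at hxI
    have hx1 : x < 1 := lt_of_le_of_ne hxI.2 (by simpa using hx)
    rw [phi, Int.fract_eq_self.mpr ⟨hxI.1.le, hx1⟩]
  rw [h2]
  have h3 : ∫ x in (0:ℝ)..1, (x - 1/2) * (x - 1/2) = ∫ x in ((0:ℝ)-1/2)..((1:ℝ)-1/2), x * x :=
    intervalIntegral.integral_comp_sub_right (fun y => y * y) (1/2)
  rw [h3]
  have h4 : ∀ x : ℝ, x * x = x ^ 2 := fun x => (sq x).symm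
  rw [intervalIntegral.integral_congr (g := fun x : ℝ => x ^ 2) (fun x _ => h4 x)]
  rw [integral_pow]
  norm_num

theorem stmt1 (m n : ℕ) (hm : 0 < m) (hn : 0 < n) :
    ∫ x in (0:ℝ)..1,
        (Int.fract (m * x) - 1/2) * (Int.fract (n * x) - 1/2)
      = (1/12) * (Nat.gcd m n : ℝ)^2 / (m * n) := by
  set d := Nat.gcd m n with hd
  have hdpos : 0 < d := Nat.gcd_pos_of_pos_left n hm
  set m' := m / d with hm'
  set n' := n / d with hn'
  have hmd : m' * d = m := Nat.div_mul_cancel (Nat.gcd_dvd_left m n)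
  have hnd : n' * d = n := Nat.div_mul_cancel (Nat.gcd_dvd_right m n)
  have hm'pos : 0 < m' := Nat.div_pos (Nat.le_of_dvd hm (Nat.gcd_dvd_left m n)) hdpos
  have hn'pos : 0 < n' := Nat.div_pos (Nat.le_of_dvd hn (Nat.gcd_dvd_right m n)) hdpos
  have hcop : Nat.Coprime m' n' := Nat.coprime_div_gcd_div_gcd hdpos
  have hd0 : (d:ℝ) ≠ 0 := by positivity
  have hm'0 : (m':ℝ) ≠ 0 := by positivity
  have hn'0 : (n':ℝ) ≠ 0 := by positivity
  set G : ℝ → ℝ := fun y => phi ((m':ℝ)*y) * phi ((n':ℝ)*y) with hG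
  have hGper : Function.Periodic G 1 := by
    intro y
    simp only [hG]
    rw [mul_add, mul_one, mul_add, mul_one]
    rw [show (m':ℝ)*y + m' = (m':ℝ)*y + (m' : ℕ) from by norm_num,
        show (n':ℝ)*y + n' = (n':ℝ)*y + (n' : ℕ) from by norm_num,
        phi_add_nat, phi_add_nat]
  have hGint : ∀ p q : ℝ, IntervalIntegrable G volume p q := by
    intro p q
    have := phi_intgr (m':ℝ) 0 (n':ℝ) 0 p q
    simpa using this
  have stepA : ∫ x in (0:ℝ)..1, phi ((m:ℝ)*x) * phi ((n:ℝ)*x) = ∫ x in (0:ℝ)..1, G x := by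
    have e1 : ∫ x in (0:ℝ)..1, phi ((m:ℝ)*x) * phi ((n:ℝ)*x)
        = ∫ x in (0:ℝ)..1, G ((d:ℝ)*x) := by
      apply intervalIntegral.integral_congr
      intro x _
      simp only [hG]
      congr 2
      · rw [show (m:ℝ) = (m':ℝ) * d from by rw [← hmd]; push_cast; ring]; ring
      · rw [show (n:ℝ) = (n':ℝ) * d from by rw [← hnd]; push_cast; ring]; ring
    rw [e1, intervalIntegral.integral_comp_mul_left G hd0]
    have e2 : ∫ x in ((d:ℝ)*0)..((d:ℝ)*1), G x = ∫ x in (0:ℝ)..((0:ℝ) + ((d:ℤ)•(1:ℝ))), G x := by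
      norm_num
    rw [e2, hGper.intervalIntegral_add_zsmul_eq (d:ℤ) 0 hGint]
    rw [zero_add]
    simp only [zsmul_eq_mul, smul_eq_mul]
    push_cast
    field_simp
  have stepB := reduce m' n' hm'pos hcop.symm
  have stepC0 := reduce n' 1 hn'pos (Nat.coprime_one_left n')
  simp only [Nat.cast_one, one_mul] at stepC0
  have stepC : ∫ x in (0:ℝ)..1, phi x * phi ((n':ℝ)*x)
      = (n':ℝ)⁻¹ * ∫ x in (0:ℝ)..1, phi x * phi x := by
    rw [intervalIntegral.integral_congr (g := fun x => phi ((n':ℝ)*x) * phi x)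
      (fun x _ => mul_comm _ _), stepC0]
  have LHS : ∫ x in (0:ℝ)..1,
        (Int.fract (m * x) - 1/2) * (Int.fract (n * x) - 1/2)
      = ∫ x in (0:ℝ)..1, phi ((m:ℝ)*x) * phi ((n:ℝ)*x) := rfl
  rw [LHS, stepA, stepB, stepC, base]
  have hmr : (m:ℝ) = (m':ℝ) * d := by rw [← hmd]; push_cast; ring
  have hnr : (n:ℝ) = (n':ℝ) * d := by rw [← hnd]; push_cast; ring
  rw [hmr, hnr]
  field_simp
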